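/- For a finite connected simple graph G: (i) μt(G) = n(G) if and only if G is a complete graph; (ii) μt(G) = n(G) − 1 if and only if G is a non-complete graph with domination number γ(G) = 1 (i.e., G has a universal vertex but is not complete). -/

import Mathlib

open SimpleGraph

/-- `X` is a total mutual-visibility set of `G`: every two vertices of `G` are `X`-visible,
i.e. joined by a shortest path whose internal vertices avoid `X`. -/
def IsTMVSet {V : Type*} (G : SimpleGraph V) (X : Set V) : Prop :=
  ∀ x y : V, ∃ p : G.Walk x y, p.length = G.dist x y ∧
    ∀ w ∈ p.support, w ≠ x → w ≠ y → w ∉ X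

/-- The total mutual-visibility number of `G`. -/
noncomputable def muT {V : Type*} (G : SimpleGraph V) : ℕ :=
  sSup {n : ℕ | ∃ X : Set V, IsTMVSet G X ∧ X.ncard = n}

/-- `D` is a dominating set of `G`. -/
def IsDomSet {V : Type*} (G : SimpleGraph V) (D : Set V) : Prop :=
  ∀ v : V, v ∉ D → ∃ u ∈ D, G.Adj u v

/-- The domination number of `G`. -/
noncomputable def gammaDom {V : Type*} (G : SimpleGraph V) : ℕ :=
  sInf {n : ℕ | ∃ D : Set V, IsDomSet G D ∧ D.ncard = n}

/-- `D` is a connected dominating set of `G`. -/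
def IsConnDomSet {V : Type*} (G : SimpleGraph V) (D : Set V) : Prop :=
  IsDomSet G D ∧ (G.induce D).Connected

/-- The connected domination number of `G`. -/
noncomputable def gammaConnDom {V : Type*} (G : SimpleGraph V) : ℕ :=
  sInf {n : ℕ | ∃ D : Set V, IsConnDomSet G D ∧ D.ncard = n}

/-- The closed neighborhood of a vertex. -/
def closedNbhd {V : Type*} (G : SimpleGraph V) (v : V) : Set V :=
  insert v (G.neighborSet v)

/-- The set of simplicial vertices of `G`. -/
def simpSet {V : Type*} (G : SimpleGraph V) : Set V :=
  {v | G.IsClique (G.neighborSet v)}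

/-- The set `P(G)` of vertices that appear as the unique common closed neighbor of
two vertices. -/
def pSet {V : Type*} (G : SimpleGraph V) : Set V :=
  {v | ∃ u w : V, closedNbhd G u ∩ closedNbhd G w = {v}}

/-- The set `C(G)` of vertices belonging to every maximum total mutual-visibility set. -/
def compulsorySet {V : Type*} (G : SimpleGraph V) : Set V :=
  {v | ∀ X : Set V, IsTMVSet G X → X.ncard = muT G → v ∈ X}

/-- The set `F(G)` of vertices belonging to no maximum total mutual-visibility set. -/
def forbiddenSet {V : Type*} (G : SimpleGraph V) : Set V :=
  {v | ∀ X : Set V, IsTMVSet G X → X.ncard = muT G → v ∉ X}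

/-- The independent total mutual-visibility number of `G`. -/
noncomputable def muIT {V : Type*} (G : SimpleGraph V) : ℕ :=
  sSup {n : ℕ | ∃ X : Set V, IsTMVSet G X ∧ (∀ u ∈ X, ∀ v ∈ X, ¬ G.Adj u v) ∧ X.ncard = n}

/-- The join `G + H` of two graphs. -/
def joinGraph {V W : Type*} (G : SimpleGraph V) (H : SimpleGraph W) :
    SimpleGraph (V ⊕ W) :=
  SimpleGraph.fromRel (fun x y =>
    (∃ a b, x = Sum.inl a ∧ y = Sum.inl b ∧ G.Adj a b) ∨
    (∃ a b, x = Sum.inr a ∧ y = Sum.inr b ∧ H.Adj a b) ∨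
    (∃ a b, x = Sum.inl a ∧ y = Sum.inr b))

/-- The corona product `G ⊙ H`: a copy of `G` together with a copy `Hᵢ` of `H` for each
vertex `uᵢ` of `G`, where `uᵢ` is joined to all vertices of `Hᵢ`. -/
def coronaProd {V W : Type*} (G : SimpleGraph V) (H : SimpleGraph W) :
    SimpleGraph (V ⊕ V × W) :=
  SimpleGraph.fromRel (fun x y =>
    (∃ a b, x = Sum.inl a ∧ y = Sum.inl b ∧ G.Adj a b) ∨
    (∃ i w w', x = Sum.inr (i, w) ∧ y = Sum.inr (i, w') ∧ H.Adj w w') ∨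
    (∃ i w, x = Sum.inl i ∧ y = Sum.inr (i, w)))

/-- The lexicographic product `G ∘ H`. -/
def lexProd {V W : Type*} (G : SimpleGraph V) (H : SimpleGraph W) :
    SimpleGraph (V × W) where
  Adj x y := G.Adj x.1 y.1 ∨ (x.1 = y.1 ∧ H.Adj x.2 y.2)
  symm := ⟨fun x y h => by
    rcases h with h | ⟨h1, h2⟩
    · exact Or.inl h.symm
    · exact Or.inr ⟨h1.symm, h2.symm⟩⟩
  loopless := ⟨fun x h => by
    rcases h with h | ⟨_, h⟩
    · exact G.loopless.irrefl _ h
    · exact H.loopless.irrefl _ h⟩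

/-- `B` induces a 2-connected subgraph of `G`. -/
def IsTwoConnSet {V : Type*} (G : SimpleGraph V) (B : Set V) : Prop :=
  3 ≤ B.ncard ∧ (G.induce B).Connected ∧ ∀ v ∈ B, (G.induce (B \ {v})).Connected

/-- From a TMV set and a nonadjacent pair, extract a vertex outside the set. -/
lemma tmv_second_vertex {V : Type*} {G : SimpleGraph V} {x y : V} {X : Set V}
    (hX : IsTMVSet G X) (hne : x ≠ y) (hadj : ¬ G.Adj x y) :
    ∃ b, b ≠ x ∧ b ≠ y ∧ b ∉ X := by
  obtain ⟨p, _, hint⟩ := hX x y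
  cases p with
  | nil => exact absurd rfl hne
  | @cons _ b _ h q =>
    refine ⟨b, h.ne', fun e => hadj (e ▸ h), ?_⟩
    exact hint b (by simp [SimpleGraph.Walk.support_cons, q.start_mem_support])
      h.ne' (fun e => hadj (e ▸ h))

lemma not_top_iff_exists {V : Type*} {G : SimpleGraph V} :
    G ≠ ⊤ ↔ ∃ x y : V, x ≠ y ∧ ¬ G.Adj x y := by
  constructor
  · intro hG
    by_contra h
    push_neg at h
    apply hG
    ext x y
    simp only [top_adj]
    exact ⟨fun h' => h'.ne, fun hne => h x y hne⟩
  · rintro ⟨x, y, hne, hadj⟩ h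
    exact hadj (h ▸ (by simpa using hne : (⊤ : SimpleGraph V).Adj x y))

/-- A universal vertex gives a TMV set of everything but that vertex. -/
lemma tmv_univ_diff {V : Type*} {G : SimpleGraph V} (hG : G.Connected) {v : V}
    (hv : ∀ u, u ≠ v → G.Adj v u) :
    IsTMVSet G (Set.univ \ {v}) := by
  intro x y
  by_cases hxy : x = y
  · subst hxy
    exact ⟨SimpleGraph.Walk.nil, by rw [SimpleGraph.Walk.length_nil, SimpleGraph.dist_self], by simp⟩
  by_cases hadj : G.Adj x y
  · refine ⟨SimpleGraph.Walk.cons hadj SimpleGraph.Walk.nil, ?_, ?_⟩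
    · simp [SimpleGraph.dist_eq_one_iff_adj.mpr hadj]
    · intro w hw hwx hwy
      simp only [SimpleGraph.Walk.support_cons, SimpleGraph.Walk.support_nil,
        List.mem_cons, List.mem_singleton] at hw
      rcases hw with h | h | h
      · exact absurd h hwx
      · exact absurd h hwy
      · simp at h
  · have hxv : x ≠ v := fun e => hadj (e ▸ hv y (fun e' => hxy (e ▸ e'.symm)))
    have hyv : y ≠ v := fun e => hadj (e ▸ (hv x (fun e' => hxy (e' ▸ e.symm))).symm)
    have h1 : G.Adj x v := (hv x hxv).symm
    have h2 : G.Adj v y := hv y hyv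
    refine ⟨SimpleGraph.Walk.cons h1 (SimpleGraph.Walk.cons h2 SimpleGraph.Walk.nil), ?_, ?_⟩
    · have hle : G.dist x y ≤ 2 := by
        have := SimpleGraph.dist_le
          (SimpleGraph.Walk.cons h1 (SimpleGraph.Walk.cons h2 SimpleGraph.Walk.nil))
        simpa using this
      have h0 : G.dist x y ≠ 0 := Nat.pos_iff_ne_zero.mp (hG.pos_dist_of_ne hxy)
      have h1' : G.dist x y ≠ 1 := fun e => hadj (SimpleGraph.dist_eq_one_iff_adj.mp e)
      simp only [SimpleGraph.Walk.length_cons, SimpleGraph.Walk.length_nil]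
      omega
    · intro w hw hwx hwy
      simp only [SimpleGraph.Walk.support_cons, SimpleGraph.Walk.support_nil,
        List.mem_cons, List.mem_singleton] at hw
      rcases hw with h | h | h | h
      · exact absurd h hwx
      · subst h; simp
      · exact absurd h hwy
      · simp at h

/-- `μt(G) = n(G)` iff `G` is complete, and `μt(G) = n(G) - 1` iff `G` is
non-complete with domination number one. -/
theorem muT_eq_card_iff_and_muT_eq_card_sub_one_iff {V : Type*} [Fintype V]
    (G : SimpleGraph V) (hG : G.Connected) :
    (muT G = Fintype.card V ↔ G = ⊤) ∧
    (muT G = Fintype.card V - 1 ↔ (G ≠ ⊤ ∧ gammaDom G = 1)) := by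
  have hVne : Nonempty V := hG.nonempty
  have hcard : 1 ≤ Fintype.card V := Fintype.card_pos
  set S := {n : ℕ | ∃ X : Set V, IsTMVSet G X ∧ X.ncard = n} with hSdef
  have hbdd : ∀ n ∈ S, n ≤ Fintype.card V := by
    rintro n ⟨X, _, rfl⟩
    simpa [Set.ncard_univ] using Set.ncard_le_ncard (Set.subset_univ X) Set.finite_univ
  have hSbdd : BddAbove S := ⟨Fintype.card V, hbdd⟩
  have hSne : S.Nonempty := by
    refine ⟨0, ∅, ?_, by simp⟩
    intro x y
    obtain ⟨p, hp⟩ := hG.exists_walk_length_eq_dist x y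
    exact ⟨p, hp, by simp⟩
  -- G ≠ ⊤ ⇒ every TMV set misses a vertex
  have hmiss : G ≠ ⊤ → ∀ X : Set V, IsTMVSet G X → X ≠ Set.univ := by
    intro htop X hX hXu
    obtain ⟨x, y, hne, hadj⟩ := not_top_iff_exists.mp htop
    obtain ⟨b, _, _, hb⟩ := tmv_second_vertex hX hne hadj
    exact hb (hXu ▸ Set.mem_univ b)
  have key2 : G ≠ ⊤ → muT G ≤ Fintype.card V - 1 := by
    intro htop
    refine csSup_le hSne ?_
    rintro n ⟨X, hX, rfl⟩
    have hne : X ≠ Set.univ := hmiss htop X hX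
    have hlt : X.ncard < Fintype.card V := by
      have := Set.ncard_lt_ncard (Set.ssubset_univ_iff.mpr hne) Set.finite_univ
      simpa [Set.ncard_univ] using this
    omega
  -- universal vertex ⇒ card - 1 ≤ muT
  have key3 : (∃ v : V, ∀ u, u ≠ v → G.Adj v u) → Fintype.card V - 1 ≤ muT G := by
    rintro ⟨v, hv⟩
    refine le_csSup hSbdd ⟨Set.univ \ {v}, tmv_univ_diff hG hv, ?_⟩
    rw [Set.ncard_diff_singleton_of_mem (Set.mem_univ v), Set.ncard_univ, Nat.card_eq_fintype_card]
  -- complete graph : muT = card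
  have key1 : G = ⊤ → muT G = Fintype.card V := by
    intro htop
    refine le_antisymm (csSup_le hSne hbdd) ?_
    refine le_csSup hSbdd ⟨Set.univ, ?_, by rw [Set.ncard_univ, Nat.card_eq_fintype_card]⟩
    intro x y
    by_cases hxy : x = y
    · subst hxy; exact ⟨SimpleGraph.Walk.nil, by rw [SimpleGraph.Walk.length_nil, SimpleGraph.dist_self], by simp⟩
    · have hadj : G.Adj x y := htop ▸ (by simpa using hxy : (⊤ : SimpleGraph V).Adj x y)
      refine ⟨SimpleGraph.Walk.cons hadj SimpleGraph.Walk.nil, ?_, ?_⟩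
      · simp [SimpleGraph.dist_eq_one_iff_adj.mpr hadj]
      · intro w hw hwx hwy
        simp only [SimpleGraph.Walk.support_cons, SimpleGraph.Walk.support_nil,
          List.mem_cons, List.mem_singleton] at hw
        rcases hw with h | h | h
        · exact absurd h hwx
        · exact absurd h hwy
        · simp at h
  -- universal vertex ↔ gammaDom = 1
  have hgamma : (∃ v : V, ∀ u, u ≠ v → G.Adj v u) ↔ gammaDom G = 1 := by
    set T := {n : ℕ | ∃ D : Set V, IsDomSet G D ∧ D.ncard = n} with hTdef
    have h0 : (0 : ℕ) ∉ T := by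
      rintro ⟨D, hD, hD0⟩
      have hDe : D = ∅ := Set.ncard_eq_zero (Set.toFinite D) |>.mp hD0
      obtain ⟨v⟩ := hVne
      obtain ⟨u, hu, _⟩ := hD v (by simp [hDe])
      simp [hDe] at hu
    constructor
    · rintro ⟨v, hv⟩
      have h1 : (1 : ℕ) ∈ T := by
        refine ⟨{v}, ?_, by simp⟩
        intro u hu
        exact ⟨v, rfl, hv u (by simpa using hu)⟩
      have hle : gammaDom G ≤ 1 := Nat.sInf_le h1
      have hne0 : gammaDom G ≠ 0 := by
        intro h
        rcases Nat.sInf_eq_zero.mp h with h | h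
        · exact h0 h
        · exact (h ▸ h1 : (1:ℕ) ∈ (∅ : Set ℕ))
      omega
    · intro hg
      have hTne : T.Nonempty := by
        by_contra h
        rw [Set.not_nonempty_iff_eq_empty] at h
        rw [gammaDom, ← hTdef, h] at hg
        simp at hg
      have hmem : gammaDom G ∈ T := Nat.sInf_mem hTne
      rw [hg] at hmem
      obtain ⟨D, hD, hD1⟩ := hmem
      obtain ⟨v, rfl⟩ := Set.ncard_eq_one.mp hD1
      refine ⟨v, fun u hu => ?_⟩
      obtain ⟨w, hw, hadj⟩ := hD u (by simpa using hu)
      simp only [Set.mem_singleton_iff] at hw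
      exact hw ▸ hadj
  constructor
  · constructor
    · intro h
      by_contra htop
      have := key2 htop
      omega
    · exact key1
  · constructor
    · intro h
      have htop : G ≠ ⊤ := by
        intro he
        have := key1 he
        omega
      refine ⟨htop, hgamma.mp ?_⟩
      -- extract a maximum TMV set of size card - 1 and find the universal vertex
      obtain ⟨x₀, y₀, hne₀, hadj₀⟩ := not_top_iff_exists.mp htop
      have hcard2 : 2 ≤ Fintype.card V := Fintype.one_lt_card_iff_nontrivial.mpr ⟨x₀, y₀, hne₀⟩
      have hmem : muT G ∈ S := Nat.sSup_mem hSne hSbdd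
      rw [h] at hmem
      obtain ⟨X, hX, hXcard⟩ := hmem
      have hXne : X ≠ Set.univ := hmiss htop X hX
      obtain ⟨v, hv⟩ : ∃ v, v ∉ X := by
        by_contra hc
        push_neg at hc
        exact hXne (Set.eq_univ_of_forall hc)
      refine ⟨v, fun u hu => ?_⟩
      by_contra hadj
      have hadj' : ¬ G.Adj v u := hadj
      obtain ⟨b, hbv, hbu, hb⟩ := tmv_second_vertex hX (Ne.symm hu) hadj'
      -- X ⊆ univ \ {v, b}, two distinct missing vertices, contradiction with size
      have hsub : X ⊆ Set.univ \ {v, b} := by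
        intro z hz
        refine ⟨Set.mem_univ z, ?_⟩
        simp only [Set.mem_insert_iff, Set.mem_singleton_iff]
        rintro (rfl | rfl)
        · exact hv hz
        · exact hb hz
      have hle2 : X.ncard ≤ Fintype.card V - 2 := by
        have h1 : X.ncard ≤ (Set.univ \ ({v, b} : Set V)).ncard :=
          Set.ncard_le_ncard hsub (Set.toFinite _)
        have h2 : (Set.univ \ ({v, b} : Set V)).ncard = Fintype.card V - 2 := by
          rw [Set.ncard_diff (Set.subset_univ ({v, b} : Set V)) (Set.toFinite _), Set.ncard_univ,
            Set.ncard_pair (Ne.symm hbv), Nat.card_eq_fintype_card]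
        omega
      omega
    · rintro ⟨htop, hg⟩
      obtain ⟨v, hv⟩ := hgamma.mpr hg
      exact le_antisymm (key2 htop) (key3 ⟨v, hv⟩)
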